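/- For every n-by-n reciprocal matrix A, the set E(A) of efficient vectors for A is PWL connected. -/

import Mathlib

def PosVec {ι : Type*} (w : ι → ℝ) : Prop := ∀ i, 0 < w i

def IsReciprocal {ι : Type*} (A : Matrix ι ι ℝ) : Prop :=
  (∀ i j, 0 < A i j) ∧ ∀ i j, A j i = 1 / A i j

def IsEfficient {ι : Type*} (A : Matrix ι ι ℝ) (w : ι → ℝ) : Prop :=
  PosVec w ∧ ∀ v : ι → ℝ, PosVec v →
    (∀ i j, |A i j - v i / v j| ≤ |A i j - w i / w j|) →
    ∃ c : ℝ, 0 < c ∧ v = c • w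

/-- The principal submatrix `A(k)` of `A` obtained by deleting row and column `k`. -/
def delMat {n : ℕ} (A : Matrix (Fin n) (Fin n) ℝ) (k : Fin n) :
    Matrix {i : Fin n // i ≠ k} {i : Fin n // i ≠ k} ℝ :=
  Matrix.of fun a b => A a.1 b.1

/-- The vector `w(k)` obtained from `w` by deleting the `k`-th entry. -/
def delVec {n : ℕ} (w : Fin n → ℝ) (k : Fin n) : {i : Fin n // i ≠ k} → ℝ :=
  fun a => w a.1

/-- `E(A)`, the set of efficient vectors for `A`. -/
def Eset {ι : Type*} (A : Matrix ι ι ℝ) : Set (ι → ℝ) := {w | IsEfficient A w}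

/-- `E(A; i)`, the set of efficient vectors `w` for `A` such that `w(i)` is efficient
for `A(i)`. -/
def EsetSub {n : ℕ} (A : Matrix (Fin n) (Fin n) ℝ) (i : Fin n) : Set (Fin n → ℝ) :=
  {w | IsEfficient A w ∧ IsEfficient (delMat A i) (delVec w i)}

/-- A set `S` of vectors is PWL (piecewise linearly) connected if any two of its points are
joined by a finite polygonal path whose vertices and segments all lie in `S`. -/
def PWLConnected {ι : Type*} (S : Set (ι → ℝ)) : Prop :=
  ∀ x ∈ S, ∀ y ∈ S, ∃ (s : ℕ) (u : ℕ → ι → ℝ), u 0 = x ∧ u s = y ∧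
    (∀ i ≤ s, u i ∈ S) ∧
    ∀ i < s, ∀ t : ℝ, 0 < t → t < 1 → (t • u i + (1 - t) • u (i + 1)) ∈ S

open Relation

section Basics
variable {ι : Type*}

lemma recip_pos {A : Matrix ι ι ℝ} (hA : IsReciprocal A) (i j : ι) : 0 < A i j := hA.1 i j

lemma recip_diag {A : Matrix ι ι ℝ} (hA : IsReciprocal A) (i : ι) : A i i = 1 := by
  have h := hA.2 i i
  have := hA.1 i i
  field_simp at h
  nlinarith

lemma recip_mul {A : Matrix ι ι ℝ} (hA : IsReciprocal A) (i j : ι) : A i j * A j i = 1 := by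
  have h := hA.2 i j
  have := hA.1 i j
  rw [h]; field_simp

/-- digraph of A at w : arc i → j iff `a_ij ≥ w_i/w_j`. -/
def Garc (A : Matrix ι ι ℝ) (w : ι → ℝ) (i j : ι) : Prop := w i ≤ A i j * w j

/-- strong connectivity of a relation (on all of ι). -/
def StrongOn (R : ι → ι → Prop) : Prop := ∀ i j, ReflTransGen R i j

lemma garc_self {A : Matrix ι ι ℝ} (hA : IsReciprocal A) (w : ι → ℝ) (i : ι) :
    Garc A w i i := by unfold Garc; rw [recip_diag hA, one_mul]

/-- semicompleteness of the digraph. -/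
lemma garc_total {A : Matrix ι ι ℝ} (hA : IsReciprocal A) {w : ι → ℝ} (hw : PosVec w)
    (i j : ι) : Garc A w i j ∨ Garc A w j i := by
  by_contra h
  push_neg at h
  obtain ⟨h1, h2⟩ := h
  unfold Garc at h1 h2
  push_neg at h1 h2
  have h3 := recip_mul hA i j
  have hwi := hw i; have hwj := hw j
  have hp1 := recip_pos hA i j; have hp2 := recip_pos hA j i
  have h4 := mul_lt_mul'' h1 h2 (by positivity) (by positivity)
  have h5 : A i j * w j * (A j i * w i) = w j * w i := by
    rw [show A i j * w j * (A j i * w i) = A i j * A j i * (w j * w i) by ring, h3, one_mul]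
  nlinarith

/-- BCC direction 1: strong digraph implies efficiency. -/
lemma efficient_of_strong {A : Matrix ι ι ℝ} (hA : IsReciprocal A) {w : ι → ℝ}
    (hw : PosVec w) (hs : StrongOn (Garc A w)) : IsEfficient A w := by
  refine ⟨hw, fun v hv hcmp => ?_⟩
  have key : ∀ i j, Garc A w i j → v j / w j ≤ v i / w i := by
    intro i j hij
    have hwi := hw i; have hwj := hw j
    have hvi := hv i; have hvj := hv j
    have hAij := recip_pos hA i j
    have hij' : w i ≤ A i j * w j := hij
    have hr : w i / w j ≤ A i j := by rw [div_le_iff₀ hwj]; linarith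
    have h1 : A i j - v i / v j ≤ |A i j - w i / w j| := le_trans (le_abs_self _) (hcmp i j)
    rw [abs_of_nonneg (by linarith)] at h1
    have h2 : w i / w j ≤ v i / v j := by linarith
    rw [div_le_div_iff₀ hwj hvj] at h2
    rw [div_le_div_iff₀ hwj hwi]
    nlinarith
  have keyR : ∀ i j, ReflTransGen (Garc A w) i j → v j / w j ≤ v i / w i := by
    intro i j h
    induction h with
    | refl => exact le_refl _
    | tail _ hbc ih => exact le_trans (key _ _ hbc) ih
  have hconst : ∀ i j, v i / w i = v j / w j := fun i j =>
    le_antisymm (keyR j i (hs j i)) (keyR i j (hs i j))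
  by_cases hne : Nonempty ι
  · obtain ⟨i0⟩ := hne
    refine ⟨v i0 / w i0, div_pos (hv i0) (hw i0), funext fun i => ?_⟩
    have := hconst i i0
    have hwi := hw i
    simp only [Pi.smul_apply, smul_eq_mul]
    rw [← this]; field_simp
  · exact ⟨1, one_pos, funext fun i => absurd ⟨i⟩ hne⟩

end Basics

section BCC2
variable {ι : Type*} [Fintype ι]
open Classical in
/-- BCC direction 2: efficiency implies strong digraph. -/
lemma strong_of_efficient {A : Matrix ι ι ℝ} (hA : IsReciprocal A) {w : ι → ℝ}
    (hw : IsEfficient A w) : StrongOn (Garc A w) := by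
  obtain ⟨hwp, heff⟩ := hw
  by_contra hns
  unfold StrongOn at hns
  push_neg at hns
  obtain ⟨i0, j0, hpath⟩ := hns
  -- R = reachable set from i0, S = complement
  set R : Finset ι := Finset.univ.filter (fun j => ReflTransGen (Garc A w) i0 j) with hR
  set S : Finset ι := Finset.univ.filter (fun j => ¬ ReflTransGen (Garc A w) i0 j) with hS
  have memR : ∀ i, i ∈ R ↔ ReflTransGen (Garc A w) i0 i := by intro i; simp [hR]
  have memS : ∀ i, i ∈ S ↔ ¬ ReflTransGen (Garc A w) i0 i := by intro i; simp [hS]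
  have hi0R : i0 ∈ R := (memR i0).2 ReflTransGen.refl
  have hj0S : j0 ∈ S := (memS j0).2 hpath
  -- no arcs from R to S, hence strict slack
  have hstrict : ∀ i ∈ R, ∀ j ∈ S, A i j * w j < w i := by
    intro i hi j hj
    by_contra hle
    push_neg at hle
    have : ReflTransGen (Garc A w) i0 j := ReflTransGen.tail ((memR i).1 hi) hle
    exact (memS j).1 hj this
  -- the scaling factor
  have hne : (R ×ˢ S).Nonempty := ⟨(i0, j0), by rw [Finset.mem_product]; exact ⟨hi0R, hj0S⟩⟩
  set s : ℝ := (R ×ˢ S).inf' hne (fun p => w p.1 / (A p.1 p.2 * w p.2)) with hsdef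
  have hs_le : ∀ i ∈ R, ∀ j ∈ S, s ≤ w i / (A i j * w j) := by
    intro i hi j hj
    exact Finset.inf'_le _ (show (i,j) ∈ R ×ˢ S by rw [Finset.mem_product]; exact ⟨hi, hj⟩)
  have hs1 : 1 < s := by
    rw [hsdef, Finset.lt_inf'_iff]
    rintro ⟨i, j⟩ hij
    rw [Finset.mem_product] at hij
    have h := hstrict i hij.1 j hij.2
    have := hwp i; have := hwp j; have := recip_pos hA i j
    rw [lt_div_iff₀ (by positivity)]
    linarith
  -- the improving vector
  set v : ι → ℝ := fun i => if i ∈ S then s * w i else w i with hv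
  have hvp : PosVec v := by
    intro i; rw [hv]; dsimp only
    split <;> [exact mul_pos (by linarith) (hwp i); exact hwp i]
  have hRS : ∀ i, i ∈ R ↔ i ∉ S := by
    intro i; rw [memR, memS]; tauto
  have hcmp : ∀ i j, |A i j - v i / v j| ≤ |A i j - w i / w j| := by
    intro i j
    have hwi := hwp i; have hwj := hwp j
    have hAij := recip_pos hA i j
    by_cases hiS : i ∈ S <;> by_cases hjS : j ∈ S
    · have : v i / v j = w i / w j := by
        rw [hv]; dsimp only; rw [if_pos hiS, if_pos hjS]
        rw [mul_div_mul_left _ _ (by linarith)]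
      rw [this]
    · -- i ∈ S, j ∈ R : currently w i / w j < A i j strictly; ratio increases to ≤ A i j
      have hjR : j ∈ R := (hRS j).2 hjS
      have hstr := hstrict j hjR i hiS  -- A j i * w i < w j
      have hvv : v i / v j = s * (w i / w j) := by
        rw [hv]; dsimp only; rw [if_pos hiS, if_neg hjS]; ring
      have hsle := hs_le j hjR i hiS  -- s ≤ w j / (A j i * w i)
      have hAji := recip_pos hA j i
      have hrec := recip_mul hA i j
      have hK : s * (A j i * w i) ≤ w j := (le_div_iff₀ (by positivity)).1 hsle
      have hub : s * (w i / w j) ≤ A i j := by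
        rw [show s * (w i / w j) = s * w i / w j by ring, div_le_iff₀ hwj]
        calc s * w i = A i j * A j i * (s * w i) := by rw [hrec, one_mul]
          _ = A i j * (s * (A j i * w i)) := by ring
          _ ≤ A i j * w j := mul_le_mul_of_nonneg_left hK hAij.le
      have hlb : w i / w j ≤ s * (w i / w j) := by nlinarith [div_pos hwi hwj]
      have hwA : w i / w j < A i j := by
        rw [div_lt_iff₀ hwj]
        calc w i = A i j * A j i * w i := by rw [hrec, one_mul]
          _ = A i j * (A j i * w i) := by ring
          _ < A i j * w j := mul_lt_mul_of_pos_left hstr hAij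
      rw [hvv, abs_of_nonneg (by linarith), abs_of_nonneg (by linarith)]
      linarith
    · -- i ∈ R, j ∈ S : currently A i j < w i / w j ; ratio decreases, stays ≥ A i j
      have hiR : i ∈ R := (hRS i).2 hiS
      have hstr := hstrict i hiR j hjS  -- A i j * w j < w i
      have hvv : v i / v j = (w i / w j) / s := by
        rw [hv]; dsimp only; rw [if_neg hiS, if_pos hjS, div_div, mul_comm]
      have hsle := hs_le i hiR j hjS  -- s ≤ w i / (A i j * w j)
      have hK : s * (A i j * w j) ≤ w i := (le_div_iff₀ (by positivity)).1 hsle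
      have hlb : A i j ≤ (w i / w j) / s := by
        rw [le_div_iff₀ (by linarith : (0:ℝ) < s), le_div_iff₀ hwj]
        calc A i j * s * w j = s * (A i j * w j) := by ring
          _ ≤ w i := hK
      have hub : (w i / w j) / s ≤ w i / w j := by
        apply div_le_self (div_pos hwi hwj).le (by linarith)
      have hwA : A i j < w i / w j := by
        rw [lt_div_iff₀ hwj]; linarith
      rw [hvv, abs_of_nonpos (by linarith), abs_of_nonpos (by linarith)]
      linarith
    · have : v i / v j = w i / w j := by
        rw [hv]; dsimp only; rw [if_neg hiS, if_neg hjS]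
      rw [this]
  obtain ⟨c, hc, hceq⟩ := heff v hvp hcmp
  have h1 : v i0 = c * w i0 := by rw [hceq]; rfl
  have h2 : v j0 = c * w j0 := by rw [hceq]; rfl
  rw [hv] at h1 h2; dsimp only at h1 h2
  rw [if_neg ((hRS i0).1 hi0R)] at h1
  rw [if_pos hj0S] at h2
  have hc1 : c = 1 := by
    have := hwp i0; nlinarith
  have := hwp j0
  rw [hc1] at h2
  nlinarith

end BCC2

section Cone
variable {ι : Type*} [Fintype ι]

/-- Any positive vector satisfying the constraints of a strong subdigraph is efficient. -/
lemma efficient_of_subrel {A : Matrix ι ι ℝ} (hA : IsReciprocal A) {D : ι → ι → Prop}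
    (hD : StrongOn D) {v : ι → ℝ} (hv : PosVec v)
    (h : ∀ i j, D i j → v i ≤ A i j * v j) : IsEfficient A v :=
  efficient_of_strong hA hv (fun i j => ReflTransGen.mono h _ _ (hD i j))

/-- segments within a cone `C_D` stay in the cone, hence are efficient. -/
lemma efficient_segment {A : Matrix ι ι ℝ} (hA : IsReciprocal A) {D : ι → ι → Prop}
    (hD : StrongOn D) {x p : ι → ℝ} (hx : PosVec x) (hp : PosVec p)
    (hxc : ∀ i j, D i j → x i ≤ A i j * x j) (hpc : ∀ i j, D i j → p i ≤ A i j * p j)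
    {a b : ℝ} (ha : 0 ≤ a) (hb : 0 ≤ b) (hab : 0 < a + b) :
    IsEfficient A (a • x + b • p) := by
  have hpos : PosVec (a • x + b • p) := by
    intro i
    simp only [Pi.add_apply, Pi.smul_apply, smul_eq_mul]
    rcases lt_or_ge 0 a with h' | h'
    · have := hx i; have := hp i; nlinarith
    · have ha0 : a = 0 := le_antisymm h' ha
      have : 0 < b := by rw [ha0] at hab; simpa using hab
      have := hp i; have := hx i; nlinarith
  apply efficient_of_subrel hA hD hpos
  intro i j hij
  simp only [Pi.add_apply, Pi.smul_apply, smul_eq_mul]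
  have h1 := hxc i j hij
  have h2 := hpc i j hij
  nlinarith

end Cone

section Arcs
variable {ι : Type*}

/-- from a nontrivial reachability there is an arc into the target. -/
lemma exists_arc_into {R : ι → ι → Prop} {i k : ι} (h : ReflTransGen R i k) (hne : i ≠ k) :
    ∃ m, m ≠ k ∧ R m k := by
  induction h with
  | refl => exact absurd rfl hne
  | @tail b c hab hbc ih =>
    by_cases hb : b = c
    · subst hb
      rcases eq_or_ne i b with h' | h'
      · exact absurd h' (by exact hne)
      · exact ih h'
    · exact ⟨b, hb, hbc⟩

/-- from a nontrivial reachability there is an arc out of the source. -/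
lemma exists_arc_out {R : ι → ι → Prop} {k j : ι} (h : ReflTransGen R k j) (hne : k ≠ j) :
    ∃ m, m ≠ k ∧ R k m := by
  induction h using ReflTransGen.head_induction_on with
  | refl => exact absurd rfl hne
  | @head b c hbc hcj ih =>
    by_cases hc : c = b
    · subst hc
      rcases eq_or_ne c j with h' | h'
      · exact absurd h' hne
      · exact ih h'
    · exact ⟨c, hc, hbc⟩

/-- a reachability crossing a set boundary yields a crossing arc. -/
lemma exists_crossing_arc {R : ι → ι → Prop} {P : ι → Prop} {a b : ι}
    (h : ReflTransGen R a b) (ha : P a) (hb : ¬ P b) :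
    ∃ i j, P i ∧ ¬ P j ∧ R i j := by
  induction h with
  | refl => exact absurd ha hb
  | @tail c d hac hcd ih =>
    by_cases hc : P c
    · exact ⟨c, d, hc, hb, hcd⟩
    · exact ih hc
end Arcs

section Del
variable {ι : Type*}

/-- principal submatrix deleting index k. -/
def subMat (A : Matrix ι ι ℝ) (k : ι) : Matrix {i : ι // i ≠ k} {i : ι // i ≠ k} ℝ :=
  Matrix.of fun a b => A a.1 b.1

/-- deleted vector. -/
def subVec (w : ι → ℝ) (k : ι) : {i : ι // i ≠ k} → ℝ := fun a => w a.1

lemma subMat_recip {A : Matrix ι ι ℝ} (hA : IsReciprocal A) (k : ι) :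
    IsReciprocal (subMat A k) :=
  ⟨fun a b => hA.1 a.1 b.1, fun a b => hA.2 a.1 b.1⟩

variable [DecidableEq ι]

/-- extend a vector on the complement of k by value c at k. -/
def extVec (k : ι) (z : {i : ι // i ≠ k} → ℝ) (c : ℝ) : ι → ℝ :=
  fun i => if h : i = k then c else z ⟨i, h⟩

@[simp] lemma extVec_k {k : ι} (z : {i : ι // i ≠ k} → ℝ) (c : ℝ) : extVec k z c k = c := by
  simp [extVec]

lemma extVec_ne {k : ι} (z : {i : ι // i ≠ k} → ℝ) (c : ℝ) (a : {i : ι // i ≠ k}) :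
    extVec k z c a.1 = z a := by
  simp only [extVec, dif_neg a.2]

lemma subVec_extVec {k : ι} (z : {i : ι // i ≠ k} → ℝ) (c : ℝ) :
    subVec (extVec k z c) k = z := by
  funext a; exact extVec_ne z c a

/-- key extension lemma: if `z` is efficient for `A(k)` and `c` lies between a lower
and an upper witness, the extension is efficient for `A`. -/
lemma efficient_extVec {A : Matrix ι ι ℝ} [Fintype ι] (hA : IsReciprocal A) {k : ι}
    {z : {i : ι // i ≠ k} → ℝ} (hz : IsEfficient (subMat A k) z) {c : ℝ} (hc : 0 < c)
    (j0 j1 : {i : ι // i ≠ k}) (h0 : A k j0.1 * z j0 ≤ c) (h1 : c ≤ A k j1.1 * z j1) :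
    IsEfficient A (extVec k z c) := by
  set w := extVec k z c with hw
  have hzp : PosVec z := hz.1
  have hwp : PosVec w := by
    intro i
    by_cases h : i = k
    · subst h; simpa [hw] using hc
    · have : w i = z ⟨i, h⟩ := extVec_ne z c ⟨i, h⟩
      rw [this]; exact hzp _
  have hzs : StrongOn (Garc (subMat A k) z) := strong_of_efficient (subMat_recip hA k) hz
  -- lift subtype paths
  have hlift : ∀ a b : {i : ι // i ≠ k}, ReflTransGen (Garc A w) a.1 b.1 := by
    intro a b
    refine ReflTransGen.lift (fun x : {i : ι // i ≠ k} => x.1) ?_ a b (hzs a b)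
    intro x y hxy
    show w x.1 ≤ A x.1 y.1 * w y.1
    rw [hw, extVec_ne z c x, extVec_ne z c y]
    exact hxy
  -- arc k → j1
  have hk_out : Garc A w k j1.1 := by
    show w k ≤ A k j1.1 * w j1.1
    rw [hw, extVec_k, extVec_ne]
    exact h1
  -- arc j0 → k
  have hk_in : Garc A w j0.1 k := by
    show w j0.1 ≤ A j0.1 k * w k
    rw [hw, extVec_k, extVec_ne]
    have hrec := recip_mul hA k j0.1
    have hAk := recip_pos hA k j0.1
    have hAk' := recip_pos hA j0.1 k
    calc z j0 = A j0.1 k * (A k j0.1 * z j0) := by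
          rw [← mul_assoc, mul_comm (A j0.1 k), hrec, one_mul]
      _ ≤ A j0.1 k * c := mul_le_mul_of_nonneg_left h0 hAk'.le
  apply efficient_of_strong hA hwp
  intro i j
  by_cases hik : i = k <;> by_cases hjk : j = k
  · subst hik; subst hjk; exact ReflTransGen.refl
  · subst hik
    exact ReflTransGen.trans (ReflTransGen.single hk_out) (hlift j1 ⟨j, hjk⟩)
  · subst hjk
    exact ReflTransGen.tail (hlift ⟨i, hik⟩ j0) hk_in
  · exact hlift ⟨i, hik⟩ ⟨j, hjk⟩

/-- efficiency gives witnesses at every coordinate (if another index exists). -/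
lemma exists_witnesses {A : Matrix ι ι ℝ} [Fintype ι] (hA : IsReciprocal A) {w : ι → ℝ}
    (hw : IsEfficient A w) {k : ι} (i : ι) (hik : i ≠ k) :
    (∃ j0 : {i : ι // i ≠ k}, A k j0.1 * w j0.1 ≤ w k) ∧
    (∃ j1 : {i : ι // i ≠ k}, w k ≤ A k j1.1 * w j1.1) := by
  have hst := strong_of_efficient hA hw
  have hwp := hw.1
  constructor
  · obtain ⟨m, hmk, harc⟩ := exists_arc_into (hst i k) hik
    refine ⟨⟨m, hmk⟩, ?_⟩
    -- harc : w m ≤ A m k * w k  ⟹  A k m * w m ≤ w k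
    have hrec := recip_mul hA k m
    have h1 := recip_pos hA k m
    have h2 := recip_pos hA m k
    have := hwp k
    calc A k m * w m ≤ A k m * (A m k * w k) := mul_le_mul_of_nonneg_left harc h1.le
      _ = w k := by rw [← mul_assoc, hrec, one_mul]
  · obtain ⟨m, hmk, harc⟩ := exists_arc_out (hst k i) (Ne.symm hik)
    exact ⟨⟨m, hmk⟩, harc⟩

end Del

section Tight
variable {ι : Type*} [Fintype ι]

/-- tightness relation: `p_i = a_ij p_j`. -/
def Tt {ι : Type*} (A : Matrix ι ι ℝ) (p : ι → ℝ) (i j : ι) : Prop := p i = A i j * p j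

lemma Tt_symm {A : Matrix ι ι ℝ} (hA : IsReciprocal A) (p : ι → ℝ) :
    Symmetric (Tt A p) := by
  intro i j h
  unfold Tt at *
  have hrec := recip_mul hA i j
  rw [h, ← mul_assoc, mul_comm (A j i), hrec, one_mul]

lemma Tt_refl {A : Matrix ι ι ℝ} (hA : IsReciprocal A) (p : ι → ℝ) (i : ι) : Tt A p i i := by
  unfold Tt; rw [recip_diag hA, one_mul]

lemma Tt_sub_garc {A : Matrix ι ι ℝ} {p : ι → ℝ} {i j : ι} (h : Tt A p i j) : Garc A p i j :=
  le_of_eq h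

open Classical in
/-- tightening: from any vector with strong digraph one can move within its cone to a point
whose tightness graph is connected (spanning). -/
lemma exists_tight_spanning {A : Matrix ι ι ℝ} (hA : IsReciprocal A) {w : ι → ℝ}
    (hw : PosVec w) (hstr : StrongOn (Garc A w)) (i0 : ι) :
    ∃ p : ι → ℝ, PosVec p ∧ (∀ i j, Garc A w i j → p i ≤ A i j * p j) ∧
      StrongOn (Tt A p) := by
  -- component of i0 in the tightness graph
  let Comp : (ι → ℝ) → Finset ι := fun p => Finset.univ.filter (fun j => ReflTransGen (Tt A p) i0 j)
  have memComp : ∀ p j, j ∈ Comp p ↔ ReflTransGen (Tt A p) i0 j := by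
    intro p j; simp [Comp]
  have aux : ∀ n : ℕ, ∀ p : ι → ℝ, PosVec p → (∀ i j, Garc A w i j → p i ≤ A i j * p j) →
      Fintype.card ι ≤ (Comp p).card + n →
      ∃ p' : ι → ℝ, PosVec p' ∧ (∀ i j, Garc A w i j → p' i ≤ A i j * p' j) ∧
        StrongOn (Tt A p') := by
    intro n
    induction n with
    | zero =>
      intro p hp hpc hcard
      refine ⟨p, hp, hpc, ?_⟩
      have huniv : Comp p = Finset.univ := by
        apply Finset.eq_univ_of_card
        have := Finset.card_le_univ (Comp p)
        omega
      intro i j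
      have hi : ReflTransGen (Tt A p) i0 i := (memComp p i).1 (huniv ▸ Finset.mem_univ i)
      have hj : ReflTransGen (Tt A p) i0 j := (memComp p j).1 (huniv ▸ Finset.mem_univ j)
      exact ReflTransGen.trans (haveI : Std.Symm (Tt A p) := ⟨fun _ _ h => Tt_symm hA p h⟩; Std.Symm.symm _ _ hi) hj
    | succ n ih =>
      intro p hp hpc hcard
      by_cases huniv : Comp p = Finset.univ
      · -- already spanning
        refine ⟨p, hp, hpc, ?_⟩
        intro i j
        have hi : ReflTransGen (Tt A p) i0 i := (memComp p i).1 (huniv ▸ Finset.mem_univ i)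
        have hj : ReflTransGen (Tt A p) i0 j := (memComp p j).1 (huniv ▸ Finset.mem_univ j)
        exact ReflTransGen.trans (haveI : Std.Symm (Tt A p) := ⟨fun _ _ h => Tt_symm hA p h⟩; Std.Symm.symm _ _ hi) hj
      · obtain ⟨j1, hj1⟩ : ∃ j1, j1 ∉ Comp p := by
          by_contra h; push_neg at h
          exact huniv (Finset.eq_univ_iff_forall.2 h)
        -- crossing Garc arc out of the component
        have hi0c : i0 ∈ Comp p := (memComp p i0).2 ReflTransGen.refl
        obtain ⟨a, b, hac, hbc, harc⟩ :=
          exists_crossing_arc (P := fun i => i ∈ Comp p) (hstr i0 j1)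
            hi0c (by exact hj1)
        -- finset of crossing arcs
        set F : Finset (ι × ι) :=
          ((Comp p) ×ˢ ((Comp p)ᶜ)).filter (fun q => Garc A w q.1 q.2) with hF
        have hFne : F.Nonempty := by
          refine ⟨(a, b), ?_⟩
          rw [hF, Finset.mem_filter, Finset.mem_product, Finset.mem_compl]
          exact ⟨⟨hac, hbc⟩, harc⟩
        have hFmem : ∀ q ∈ F, q.1 ∈ Comp p ∧ q.2 ∉ Comp p ∧ Garc A w q.1 q.2 := by
          intro q hq
          rw [hF, Finset.mem_filter, Finset.mem_product, Finset.mem_compl] at hq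
          exact ⟨hq.1.1, hq.1.2, hq.2⟩
        set s : ℝ := F.inf' hFne (fun q => A q.1 q.2 * p q.2 / p q.1) with hs
        -- each crossing arc is strictly slack
        have hslack : ∀ q ∈ F, p q.1 < A q.1 q.2 * p q.2 := by
          intro q hq
          obtain ⟨h1, h2, h3⟩ := hFmem q hq
          rcases lt_or_eq_of_le (hpc q.1 q.2 h3) with h | h
          · exact h
          · exfalso
            apply h2
            rw [memComp]
            exact ReflTransGen.tail ((memComp p q.1).1 h1) h
        have hs1 : 1 < s := by
          rw [hs, Finset.lt_inf'_iff]
          intro q hq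
          have := hslack q hq
          have := hp q.1; have := hp q.2
          rw [lt_div_iff₀ (by positivity)]
          linarith
        have hs_le : ∀ q ∈ F, s * p q.1 ≤ A q.1 q.2 * p q.2 := by
          intro q hq
          have h := Finset.inf'_le (f := fun q : ι × ι => A q.1 q.2 * p q.2 / p q.1) hq
          rw [← hs] at h
          have := hp q.1
          rw [le_div_iff₀ (by positivity)] at h
          linarith
        -- the argmin arc becomes tight
        obtain ⟨qm, hqm, hqmeq⟩ := Finset.exists_mem_eq_inf' hFne
          (fun q : ι × ι => A q.1 q.2 * p q.2 / p q.1)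
        set p' : ι → ℝ := fun i => if i ∈ Comp p then s * p i else p i with hp'
        have hp'pos : PosVec p' := by
          intro i; rw [hp']; dsimp only
          split
          · exact mul_pos (by linarith) (hp i)
          · exact hp i
        have hp'in : ∀ i ∈ Comp p, p' i = s * p i := by
          intro i hi; rw [hp']; dsimp only; rw [if_pos hi]
        have hp'out : ∀ i, i ∉ Comp p → p' i = p i := by
          intro i hi; rw [hp']; dsimp only; rw [if_neg hi]
        -- cone condition preserved
        have hp'c : ∀ i j, Garc A w i j → p' i ≤ A i j * p' j := by
          intro i j hij
          by_cases hic : i ∈ Comp p <;> by_cases hjc : j ∈ Comp p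
          · rw [hp'in i hic, hp'in j hjc]
            have := hpc i j hij
            nlinarith [recip_pos hA i j]
          · rw [hp'in i hic, hp'out j hjc]
            exact hs_le (i, j) (by
              rw [hF, Finset.mem_filter, Finset.mem_product, Finset.mem_compl]
              exact ⟨⟨hic, hjc⟩, hij⟩)
          · rw [hp'out i hic, hp'in j hjc]
            have h1 := hpc i j hij
            have h2 := recip_pos hA i j
            have h3 := hp j
            nlinarith [mul_nonneg (mul_pos h2 h3).le (by linarith : (0:ℝ) ≤ s - 1)]
          · rw [hp'out i hic, hp'out j hjc]
            exact hpc i j hij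
        -- old tight arcs inside the component are preserved; component grows
        have hpres : ∀ j, ReflTransGen (Tt A p) i0 j → ReflTransGen (Tt A p') i0 j := by
          intro j hj
          induction hj with
          | refl => exact ReflTransGen.refl
          | @tail b c hab hbc ih2 =>
            have hbC : b ∈ Comp p := (memComp p b).2 hab
            have hcC : c ∈ Comp p := (memComp p c).2 (ReflTransGen.tail hab hbc)
            refine ReflTransGen.tail ih2 ?_
            show p' b = A b c * p' c
            rw [hp'in b hbC, hp'in c hcC]
            unfold Tt at hbc
            rw [hbc]; ring
        -- the argmin target joins the component
        have hnew : Tt A p' qm.1 qm.2 := by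
          obtain ⟨h1, h2, h3⟩ := hFmem qm hqm
          show p' qm.1 = A qm.1 qm.2 * p' qm.2
          rw [hp'in _ h1, hp'out _ h2]
          have hpq := hp qm.1
          have : s = A qm.1 qm.2 * p qm.2 / p qm.1 := by rw [hs, hqmeq]
          rw [this]; field_simp
        have hsubset : Comp p ⊂ Comp p' := by
          constructor
          · intro j hj
            exact (memComp p' j).2 (hpres j ((memComp p j).1 hj))
          · intro hcon
            obtain ⟨h1, h2, _⟩ := hFmem qm hqm
            apply h2
            apply hcon
            rw [memComp]
            exact ReflTransGen.tail (hpres _ ((memComp p qm.1).1 h1)) hnew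
        have hcard' : Fintype.card ι ≤ (Comp p').card + n := by
          have := Finset.card_lt_card hsubset
          omega
        exact ih p' hp'pos hp'c hcard'
  exact aux (Fintype.card ι) w hw (fun i j h => h) (by omega)

end Tight

section Leaf
variable {ι : Type*} [Fintype ι]

/-- every connected symmetric graph on ≥ 2 vertices has a vertex whose removal
keeps it connected (a "leaf" of a BFS tree). -/
lemma exists_removable [DecidableEq ι] {R : ι → ι → Prop} (hsym : Symmetric R) (hconn : StrongOn R)
    (i0 : ι) (hcard : 1 < Fintype.card ι) :
    ∃ k : ι, k ≠ i0 ∧ StrongOn (fun a b : {i : ι // i ≠ k} => R a.1 b.1) := by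
  -- bounded-length reachability
  let reachN : ℕ → ι → Prop := fun n => Nat.rec (fun j => j = i0)
    (fun _ ih j => ih j ∨ ∃ m, ih m ∧ R m j) n
  have reach0 : ∀ j, reachN 0 j ↔ j = i0 := fun j => Iff.rfl
  have reachS : ∀ n j, reachN (n+1) j ↔ reachN n j ∨ ∃ m, reachN n m ∧ R m j :=
    fun n j => Iff.rfl
  have hex : ∀ j, ∃ n, reachN n j := by
    intro j
    have h := hconn i0 j
    induction h with
    | refl => exact ⟨0, rfl⟩
    | @tail b c hab hbc ih =>
      obtain ⟨n, hn⟩ := ih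
      exact ⟨n + 1, Or.inr ⟨b, hn, hbc⟩⟩
  let d : ι → ℕ := fun j => @Nat.find _ (fun n => Classical.propDecidable _) (hex j)
  have dspec : ∀ j, reachN (d j) j := fun j => @Nat.find_spec _ (fun n => Classical.propDecidable _) (hex j)
  have dmin : ∀ j n, reachN n j → d j ≤ n :=
    fun j n hn => @Nat.find_min' _ (fun n => Classical.propDecidable _) (hex j) n hn
  have hd0 : d i0 = 0 := Nat.le_zero.1 (dmin i0 0 rfl)
  have dstep : ∀ j n, d j = n + 1 → ∃ m, R m j ∧ d m ≤ n := by
    intro j n hj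
    have h := dspec j
    rw [hj, reachS] at h
    rcases h with h | ⟨m, hm, hmj⟩
    · exact absurd (dmin j n h) (by omega)
    · exact ⟨m, hmj, dmin m n hm⟩
  -- pick a vertex ≠ i0 of maximal distance
  have hne : (Finset.univ.erase i0).Nonempty := by
    rw [← Finset.card_pos, Finset.card_erase_of_mem (Finset.mem_univ i0), Finset.card_univ]
    omega
  obtain ⟨k, hk, hkmax⟩ := Finset.exists_max_image (Finset.univ.erase i0) d hne
  have hki0 : k ≠ i0 := (Finset.mem_erase.1 hk).1
  have hmax : ∀ j, d j ≤ d k := by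
    intro j
    rcases eq_or_ne j i0 with h | h
    · rw [h, hd0]; omega
    · exact hkmax j (Finset.mem_erase.2 ⟨h, Finset.mem_univ j⟩)
  refine ⟨k, hki0, ?_⟩
  set Rk : {i : ι // i ≠ k} → {i : ι // i ≠ k} → Prop := fun a b => R a.1 b.1 with hRk
  have hsymk : Symmetric Rk := fun a b h => hsym h
  have hi0k : i0 ≠ k := Ne.symm hki0
  -- reach everything from i0 avoiding k
  have main : ∀ n, ∀ j : ι, d j ≤ n → ∀ hj : j ≠ k,
      ReflTransGen Rk ⟨i0, hi0k⟩ ⟨j, hj⟩ := by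
    intro n
    induction n with
    | zero =>
      intro j hdj hj
      have : reachN 0 j := by
        have : d j = 0 := Nat.le_zero.1 hdj
        have h := dspec j; rwa [this] at h
      rw [reach0] at this
      subst this
      exact ReflTransGen.refl
    | succ n ih =>
      intro j hdj hj
      rcases Nat.lt_or_ge (d j) (n+1) with h | h
      · exact ih j (by omega) hj
      · have hdj' : d j = n + 1 := by omega
        obtain ⟨m, hmj, hdm⟩ := dstep j n hdj'
        have hmk : m ≠ k := by
          intro hcon
          rw [hcon] at hdm
          have := hmax j
          omega
        exact ReflTransGen.tail (ih m hdm hmk) (show Rk ⟨m, hmk⟩ ⟨j, hj⟩ from hmj)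
  intro a b
  have h1 : ReflTransGen Rk ⟨i0, hi0k⟩ b := by
    obtain ⟨j, hj⟩ := b; exact main (d j) j le_rfl hj
  have h2 : ReflTransGen Rk ⟨i0, hi0k⟩ a := by
    obtain ⟨j, hj⟩ := a; exact main (d j) j le_rfl hj
  exact ReflTransGen.trans (haveI : Std.Symm Rk := ⟨fun _ _ h => hsymk h⟩; Std.Symm.symm _ _ h2) h1

end Leaf

section PWL
variable {ι : Type*}

/-- a PWL path between two points within `S`. -/
def PWLpath (S : Set (ι → ℝ)) (x y : ι → ℝ) : Prop :=
  ∃ (s : ℕ) (u : ℕ → ι → ℝ), u 0 = x ∧ u s = y ∧ (∀ i ≤ s, u i ∈ S) ∧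
    ∀ i < s, ∀ t : ℝ, 0 < t → t < 1 → (t • u i + (1 - t) • u (i + 1)) ∈ S

lemma PWLpath.single {S : Set (ι → ℝ)} {x y : ι → ℝ} (hx : x ∈ S) (hy : y ∈ S)
    (hseg : ∀ t : ℝ, 0 < t → t < 1 → (t • x + (1 - t) • y) ∈ S) : PWLpath S x y := by
  refine ⟨1, fun i => if i = 0 then x else y, by simp, by simp, ?_, ?_⟩
  · intro i _
    by_cases h : i = 0 <;> simp [h, hx, hy]
  · intro i hi t ht ht'
    interval_cases i
    simpa using hseg t ht ht'

lemma PWLpath.trans {S : Set (ι → ℝ)} {x y z : ι → ℝ} (h1 : PWLpath S x y)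
    (h2 : PWLpath S y z) : PWLpath S x z := by
  obtain ⟨s1, u1, h10, h11, h1m, h1s⟩ := h1
  obtain ⟨s2, u2, h20, h21, h2m, h2s⟩ := h2
  refine ⟨s1 + s2, fun i => if i ≤ s1 then u1 i else u2 (i - s1), ?_, ?_, ?_, ?_⟩
  · dsimp only; rw [if_pos (Nat.zero_le s1), h10]
  · dsimp only
    by_cases h : s2 = 0
    · subst h
      rw [if_pos (by omega : s1 + 0 ≤ s1), Nat.add_zero, h11, ← h20, ← h21]
    · rw [if_neg (by omega : ¬ s1 + s2 ≤ s1)]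
      have e : s1 + s2 - s1 = s2 := by omega
      rw [e, h21]
  · intro i hi
    dsimp only
    by_cases h : i ≤ s1
    · rw [if_pos h]; exact h1m i h
    · rw [if_neg h]; exact h2m (i - s1) (by omega)
  · intro i hi t ht ht'
    dsimp only
    by_cases h : i + 1 ≤ s1
    · rw [if_pos (by omega : i ≤ s1), if_pos h]
      exact h1s i (by omega) t ht ht'
    · by_cases h' : i ≤ s1
      · have hieq : i = s1 := by omega
        rw [if_pos h', if_neg h, hieq]
        have e1 : s1 + 1 - s1 = 1 := by omega
        rw [e1, h11, ← h20]
        exact h2s 0 (by omega) t ht ht'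
      · rw [if_neg h', if_neg h]
        have e1 : i + 1 - s1 = (i - s1) + 1 := by omega
        rw [e1]
        exact h2s (i - s1) (by omega) t ht ht'

lemma PWLpath.symm {S : Set (ι → ℝ)} {x y : ι → ℝ} (h : PWLpath S x y) : PWLpath S y x := by
  obtain ⟨s, u, h0, h1, hm, hs⟩ := h
  refine ⟨s, fun i => u (s - i), ?_, ?_, ?_, ?_⟩
  · dsimp only; rw [Nat.sub_zero, h1]
  · dsimp only; rw [Nat.sub_self, h0]
  · intro i hi; dsimp only; exact hm (s - i) (by omega)
  · intro i hi t ht ht'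
    dsimp only
    have e1 : s - i = (s - (i+1)) + 1 := by omega
    have key := hs (s - (i+1)) (by omega) (1 - t) (by linarith) (by linarith)
    have e2 : 1 - (1 - t) = t := by ring
    rw [e2] at key
    rw [e1]
    rw [add_comm] at key
    exact key

end PWL

section Col
variable {ι : Type*} [Fintype ι] [DecidableEq ι]

/-- columns of a reciprocal matrix are efficient. -/
lemma col_strong {A : Matrix ι ι ℝ} (hA : IsReciprocal A) (r : ι) :
    StrongOn (Garc A (fun i => A i r)) := by
  have harc1 : ∀ i, Garc A (fun i => A i r) i r := by
    intro i
    show A i r ≤ A i r * A r r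
    rw [recip_diag hA, mul_one]
  have harc2 : ∀ j, Garc A (fun i => A i r) r j := by
    intro j
    show A r r ≤ A r j * A j r
    rw [recip_diag hA, recip_mul hA r j]
  intro i j
  exact ReflTransGen.trans (ReflTransGen.single (harc1 i)) (ReflTransGen.single (harc2 j))

lemma col_efficient {A : Matrix ι ι ℝ} (hA : IsReciprocal A) (r : ι) :
    IsEfficient A (fun i => A i r) :=
  efficient_of_strong hA (fun i => recip_pos hA i r) (col_strong hA r)

/-- deleted columns (k ≠ r) are efficient for the submatrix. -/
lemma col_sub_efficient {A : Matrix ι ι ℝ} (hA : IsReciprocal A) {r k : ι} (hrk : r ≠ k) :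
    IsEfficient (subMat A k) (subVec (fun i => A i r) k) := by
  set B := subMat A k with hB
  have hBrec := subMat_recip hA k
  have : subVec (fun i => A i r) k = fun a : {i : ι // i ≠ k} => B a ⟨r, hrk⟩ := by
    funext a; rfl
  rw [this]
  exact col_efficient hBrec ⟨r, hrk⟩

end Col

section Vertical
variable {ι : Type*} [Fintype ι] [DecidableEq ι]

lemma extVec_combo {k : ι} (z z' : {i : ι // i ≠ k} → ℝ) (c c' t : ℝ) :
    t • extVec k z c + (1 - t) • extVec k z' c' =
      extVec k (t • z + (1 - t) • z') (t * c + (1 - t) * c') := by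
  funext i
  simp only [Pi.add_apply, Pi.smul_apply, smul_eq_mul, extVec]
  by_cases h : i = k
  · rw [dif_pos h, dif_pos h, dif_pos h]
  · rw [dif_neg h, dif_neg h, dif_neg h]

/-- a vertical segment over a fixed efficient `z`, between two admissible heights. -/
lemma vertical_path {A : Matrix ι ι ℝ} (hA : IsReciprocal A) {k : ι}
    {z : {i : ι // i ≠ k} → ℝ} (hz : IsEfficient (subMat A k) z) {c c' : ℝ}
    (hc : 0 < c) (hc' : 0 < c')
    (j0 j1 j0' j1' : {i : ι // i ≠ k})
    (h0 : A k j0.1 * z j0 ≤ c) (h1 : c ≤ A k j1.1 * z j1)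
    (h0' : A k j0'.1 * z j0' ≤ c') (h1' : c' ≤ A k j1'.1 * z j1') :
    PWLpath (Eset A) (extVec k z c) (extVec k z c') := by
  apply PWLpath.single
  · exact efficient_extVec hA hz hc j0 j1 h0 h1
  · exact efficient_extVec hA hz hc' j0' j1' h0' h1'
  · intro t ht ht'
    rw [extVec_combo]
    have hzz : t • z + (1 - t) • z = z := by
      funext a; simp only [Pi.add_apply, Pi.smul_apply, smul_eq_mul]; ring
    rw [hzz]
    have hct : 0 < t * c + (1 - t) * c' := by nlinarith
    -- choose combined witnesses
    by_cases hlow : A k j0.1 * z j0 ≤ A k j0'.1 * z j0'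
    · by_cases hup : A k j1.1 * z j1 ≤ A k j1'.1 * z j1'
      · exact efficient_extVec hA hz hct j0 j1' (by nlinarith) (by nlinarith)
      · exact efficient_extVec hA hz hct j0 j1 (by nlinarith) (by nlinarith)
    · by_cases hup : A k j1.1 * z j1 ≤ A k j1'.1 * z j1'
      · exact efficient_extVec hA hz hct j0' j1' (by nlinarith) (by nlinarith)
      · exact efficient_extVec hA hz hct j0' j1 (by nlinarith) (by nlinarith)

end Vertical

section Band
variable {ι : Type*} [Fintype ι] [DecidableEq ι]

lemma extVec_subVec {k : ι} (w : ι → ℝ) : extVec k (subVec w k) (w k) = w := by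
  funext i
  by_cases h : i = k
  · subst h; simp [extVec]
  · simp [extVec, dif_neg h, subVec]

/-- from any efficient vector whose deletion at `k` is efficient for `A(k)`, there is a PWL
path inside `E(A)` to the column of `A` at any index `r ≠ k`. -/
lemma band_path {A : Matrix ι ι ℝ} (hA : IsReciprocal A) {k r : ι} (hrk : r ≠ k)
    {w : ι → ℝ} (hw : IsEfficient A w) (hwk : IsEfficient (subMat A k) (subVec w k))
    (hIH : PWLConnected (Eset (subMat A k))) :
    PWLpath (Eset A) w (fun i => A i r) := by
  set z : {i : ι // i ≠ k} → ℝ := subVec w k with hz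
  set rr : {i : ι // i ≠ k} := ⟨r, hrk⟩ with hrr
  have hwp := hw.1
  have hzp : PosVec z := fun a => hwp a.1
  -- witnesses for height w k
  obtain ⟨⟨j0, hj0⟩, ⟨j1, hj1⟩⟩ := exists_witnesses hA hw (i := r) hrk
  have hAkr := recip_pos hA k r
  -- vertical path from w to the `rr`-lift of z
  have hvert : PWLpath (Eset A) w (extVec k z (A k r * z rr)) := by
    have e : w = extVec k z (w k) := (extVec_subVec w).symm
    rw [e]
    exact vertical_path hA hwk (hwp k) (mul_pos hAkr (hzp rr))
      j0 j1 rr rr hj0 hj1 le_rfl le_rfl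
  -- lifted path from the lift of z to the lift of z' (= column r)
  set z' : {i : ι // i ≠ k} → ℝ := subVec (fun i => A i r) k with hz'
  have hz'mem : z' ∈ Eset (subMat A k) := col_sub_efficient hA hrk
  have hzmem : z ∈ Eset (subMat A k) := hwk
  obtain ⟨s, u, hu0, hus, hum, husg⟩ := hIH z hzmem z' hz'mem
  have hcol : extVec k z' (A k r * z' rr) = (fun i => A i r) := by
    funext i
    by_cases h : i = k
    · subst h
      have : z' rr = A r r := rfl
      rw [extVec_k, this, recip_diag hA, mul_one]
    · rw [show i = (⟨i, h⟩ : {i : ι // i ≠ k}).1 from rfl, extVec_ne]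
      rfl
  have hlift : PWLpath (Eset A) (extVec k z (A k r * z rr)) (fun i => A i r) := by
    rw [← hcol]
    refine ⟨s, fun i => extVec k (u i) (A k r * u i rr), by dsimp only; rw [hu0], by dsimp only; rw [hus], ?_, ?_⟩
    · intro i hi
      have hui := hum i hi
      exact efficient_extVec hA hui (mul_pos hAkr (hui.1 rr)) rr rr le_rfl le_rfl
    · intro i hi t ht ht'
      rw [extVec_combo]
      have hmem := husg i hi t ht ht'
      have he : t * (A k r * u i rr) + (1 - t) * (A k r * u (i+1) rr) =
          A k r * ((t • u i + (1 - t) • u (i + 1)) rr) := by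
        simp only [Pi.add_apply, Pi.smul_apply, smul_eq_mul]; ring
      rw [he]
      have hp2 : PosVec (t • u i + (1 - t) • u (i + 1)) := hmem.1
      exact efficient_extVec hA hmem (mul_pos hAkr (hp2 rr)) rr rr le_rfl le_rfl
  exact hvert.trans hlift

end Band

section Main

lemma pwl_small {ι : Type*} [Fintype ι] [DecidableEq ι] {A : Matrix ι ι ℝ} (hA : IsReciprocal A)
    (hcard : Fintype.card ι ≤ 2) : PWLConnected (Eset A) := by
  have htight : ∀ w ∈ Eset A, ∀ a b : ι, w a = A a b * w b := by
    intro w hw a b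
    rcases eq_or_ne a b with h | h
    · subst h; rw [recip_diag hA, one_mul]
    · have hst := strong_of_efficient hA hw
      have hwp := hw.1
      have pair : ∀ {c d : ι}, c ≠ d → ∀ m, m ≠ c → m = d := by
        intro c d hcd m hmc
        by_contra hmd
        have hle : ({c, d, m} : Finset ι).card ≤ Fintype.card ι := Finset.card_le_univ _
        rw [Finset.card_insert_of_notMem (by simp [hcd, Ne.symm hmc]),
          Finset.card_insert_of_notMem
            (by simp only [Finset.mem_singleton]; exact fun hh => hmd hh.symm),
          Finset.card_singleton] at hle
        omega
      obtain ⟨m, hm, harc⟩ := exists_arc_out (hst a b) h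
      rw [pair h m hm] at harc
      obtain ⟨m', hm', harc'⟩ := exists_arc_out (hst b a) (Ne.symm h)
      rw [pair (Ne.symm h) m' hm'] at harc'
      have harc2 : w a ≤ A a b * w b := harc
      have harc2' : w b ≤ A b a * w a := harc'
      have h2 : A a b * w b ≤ w a := by
        calc A a b * w b ≤ A a b * (A b a * w a) :=
              mul_le_mul_of_nonneg_left harc2' (recip_pos hA a b).le
          _ = w a := by rw [← mul_assoc, recip_mul hA a b, one_mul]
      linarith
  intro x hx y hy
  have : PWLpath (Eset A) x y := by
    apply PWLpath.single hx hy
    intro t ht ht'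
    have hxp := hx.1
    have hyp := hy.1
    have hpos : PosVec (t • x + (1 - t) • y) := by
      intro i
      simp only [Pi.add_apply, Pi.smul_apply, smul_eq_mul]
      have := hxp i; have := hyp i
      nlinarith
    apply efficient_of_strong hA hpos
    intro i j
    apply ReflTransGen.single
    show (t • x + (1 - t) • y) i ≤ A i j * (t • x + (1 - t) • y) j
    simp only [Pi.add_apply, Pi.smul_apply, smul_eq_mul]
    rw [htight x hx i j, htight y hy i j]
    ring_nf
    exact le_rfl
  exact this

theorem pwl_main : ∀ (N : ℕ) (ι : Type) [Fintype ι] [DecidableEq ι],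
    Fintype.card ι ≤ N → ∀ (A : Matrix ι ι ℝ), IsReciprocal A → PWLConnected (Eset A) := by
  intro N
  induction N with
  | zero =>
    intro ι _ _ hc A hA
    exact pwl_small hA (by omega)
  | succ N ih =>
    intro ι _ _ hc A hA
    by_cases hsmall : Fintype.card ι ≤ 2
    · exact pwl_small hA hsmall
    · push_neg at hsmall
      intro x hx y hy
      have hne : Nonempty ι := Fintype.card_pos_iff.1 (by omega)
      obtain ⟨i0⟩ := hne
      have connect : ∀ w ∈ Eset A, ∃ k : ι, ∀ r : ι, r ≠ k →
          PWLpath (Eset A) w (fun i => A i r) := by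
        intro w hw
        have hwp := hw.1
        have hD := strong_of_efficient hA hw
        obtain ⟨p, hpp, hpc, hTt⟩ := exists_tight_spanning hA hwp hD i0
        obtain ⟨k, hk, hkst⟩ := exists_removable (Tt_symm hA p) hTt i0 (by omega)
        have hpS : p ∈ Eset A := efficient_of_subrel hA hD hpp hpc
        have hpkS : IsEfficient (subMat A k) (subVec p k) :=
          efficient_of_subrel (subMat_recip hA k) hkst (fun a => hpp a.1)
            (fun a b h => le_of_eq h)
        have hcards : Fintype.card {i : ι // i ≠ k} = Fintype.card ι - 1 := by
          simp [Fintype.card_subtype_compl]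
        have hIH : PWLConnected (Eset (subMat A k)) :=
          ih _ (by omega) _ (subMat_recip hA k)
        refine ⟨k, fun r hrk => ?_⟩
        have seg : PWLpath (Eset A) w p :=
          PWLpath.single hw hpS (fun t ht ht' =>
            efficient_segment hA hD hwp hpp (fun i j h => h) hpc
              (le_of_lt ht) (by linarith) (by linarith))
        exact seg.trans (band_path hA hrk hpS hpkS hIH)
      obtain ⟨kx, hx'⟩ := connect x hx
      obtain ⟨ky, hy'⟩ := connect y hy
      obtain ⟨r, hr1, hr2⟩ : ∃ r : ι, r ≠ kx ∧ r ≠ ky := by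
        by_contra hcon
        push_neg at hcon
        have hsub : (Finset.univ : Finset ι) ⊆ {kx, ky} := by
          intro r _
          simp only [Finset.mem_insert, Finset.mem_singleton]
          rcases eq_or_ne r kx with h | h
          · exact Or.inl h
          · exact Or.inr (hcon r h)
        have h1 := Finset.card_le_card hsub
        have h2 : ({kx, ky} : Finset ι).card ≤ 2 := by
          apply le_trans (Finset.card_insert_le _ _)
          simp
        rw [Finset.card_univ] at h1
        omega
      exact (hx' r hr1).trans ((hy' r hr2).symm)

end Main


/-- for every reciprocal matrix `A`, the set `E(A)` of efficient vectors is
PWL connected. -/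
theorem Eset_PWLConnected {n : ℕ} (A : Matrix (Fin n) (Fin n) ℝ) (hA : IsReciprocal A) :
    PWLConnected (Eset A) :=
  pwl_main n (Fin n) (by simp) A hA
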